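/- Let η₁, η₂ > 0 with η₁² - 4η₂ > 0, d₀ > 0, v₀ ∈ ℝ, and η₁ ≥ 2|v₀|/d₀. Let d̃ : [0,∞) → ℝ be twice continuously differentiable with d̃(0) = d₀, d̃'(0) = v₀, and d̃''(t) ≥ -η₁ d̃'(t) - η₂ d̃(t) for all t ≥ 0. Then d̃(t) > 0 for all t ∈ [0,∞). -/

import Mathlib

/-- Grönwall-type lower bound: if `deriv f t ≥ c * f t` on `[0,∞)`, then
`f t ≥ exp (c*t) * f 0` there. -/
lemma gronwall_lower (c : ℝ) (f : ℝ → ℝ) (hf : Differentiable ℝ f)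
    (h : ∀ t ≥ (0 : ℝ), c * f t ≤ deriv f t) :
    ∀ t ≥ (0 : ℝ), Real.exp (c * t) * f 0 ≤ f t := by
  set g : ℝ → ℝ := fun t => Real.exp (-c * t) * f t with hg
  have hder : ∀ t : ℝ, HasDerivAt g
      (Real.exp (-c * t) * (deriv f t - c * f t)) t := by
    intro t
    have he : HasDerivAt (fun t => Real.exp (-c * t)) (-c * Real.exp (-c * t)) t := by
      simpa [mul_comm] using (((hasDerivAt_id t).const_mul (-c)).exp)
    have : HasDerivAt (fun t => Real.exp (-c * t) * f t)
        (-c * Real.exp (-c * t) * f t + Real.exp (-c * t) * deriv f t) t :=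
      he.mul (hf t).hasDerivAt
    convert this using 1
    ring
  have hmono : MonotoneOn g (Set.Ici (0 : ℝ)) := by
    apply monotoneOn_of_deriv_nonneg (convex_Ici 0)
    · exact (Continuous.mul (by continuity) hf.continuous).continuousOn
    · intro x hx
      exact ((hder x).differentiableAt).differentiableWithinAt
    · intro x hx
      rw [interior_Ici] at hx
      rw [(hder x).deriv]
      have h1 := h x (le_of_lt hx)
      have h2 := (Real.exp_pos (-c * x)).le
      nlinarith
  intro t ht
  have := hmono (Set.self_mem_Ici) (Set.mem_Ici.mpr ht) ht
  have h0 : g 0 = f 0 := by simp [hg]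
  have hgt : g t = Real.exp (-c * t) * f t := rfl
  rw [h0, hgt] at this
  have hexp : (0 : ℝ) < Real.exp (-c * t) := Real.exp_pos _
  have := mul_le_mul_of_nonneg_left this (le_of_lt (Real.exp_pos (c * t)))
  calc Real.exp (c * t) * f 0 ≤ Real.exp (c * t) * (Real.exp (-c * t) * f t) := this
    _ = f t := by rw [← mul_assoc, ← Real.exp_add]; ring_nf; simp

theorem second_order_VFI_keeps_distance_positive
    (η₁ η₂ d₀ v₀ : ℝ) (hη₁ : 0 < η₁) (hη₂ : 0 < η₂)
    (hdisc : η₁ ^ 2 - 4 * η₂ > 0) (hd₀ : 0 < d₀)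
    (hrate : η₁ ≥ 2 * |v₀| / d₀)
    (d : ℝ → ℝ) (hC2 : ContDiff ℝ 2 d)
    (h0 : d 0 = d₀) (h0' : deriv d 0 = v₀)
    (hineq : ∀ t ≥ (0 : ℝ), deriv (deriv d) t ≥ -η₁ * deriv d t - η₂ * d t) :
    ∀ t ≥ (0 : ℝ), d t > 0 := by
  -- roots of r² + η₁ r + η₂ = 0
  set s : ℝ := Real.sqrt (η₁ ^ 2 - 4 * η₂) with hs
  have hs2 : s ^ 2 = η₁ ^ 2 - 4 * η₂ := Real.sq_sqrt (le_of_lt hdisc)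
  have hspos : 0 < s := Real.sqrt_pos.mpr hdisc
  have hslt : s < η₁ := by
    nlinarith [Real.sqrt_nonneg (η₁ ^ 2 - 4 * η₂)]
  set l₁ : ℝ := (-η₁ - s) / 2 with hl₁
  set l₂ : ℝ := (-η₁ + s) / 2 with hl₂
  have hsum : l₁ + l₂ = -η₁ := by rw [hl₁, hl₂]; ring
  have hprod : l₁ * l₂ = η₂ := by rw [hl₁, hl₂]; nlinarith
  -- differentiability
  have hC2' : ContDiff ℝ ((1 : ℕ) + 1) d := by exact_mod_cast hC2
  have hdd : Differentiable ℝ d := (contDiff_succ_iff_deriv.mp hC2').1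
  have hdd' : Differentiable ℝ (deriv d) :=
    ((contDiff_succ_iff_deriv.mp hC2').2.2).differentiable (by norm_num)
  set u : ℝ → ℝ := fun t => deriv d t - l₁ * d t with hu
  have hud : Differentiable ℝ u := hdd'.sub (hdd.const_mul l₁)
  have huder : ∀ t : ℝ, deriv u t = deriv (deriv d) t - l₁ * deriv d t := by
    intro t
    have : HasDerivAt u (deriv (deriv d) t - l₁ * deriv d t) t :=
      ((hdd' t).hasDerivAt).sub (((hdd t).hasDerivAt).const_mul l₁)
    exact this.deriv
  -- u satisfies u' ≥ l₂ u on [0,∞)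
  have hu0 : 0 < u 0 := by
    have habs : |v₀| ≤ η₁ * d₀ / 2 := by
      rw [ge_iff_le, div_le_iff₀ hd₀] at hrate
      linarith
    simp only [hu, h0, h0', hl₁]
    nlinarith [neg_abs_le v₀, mul_pos hspos hd₀]
  have hugr : ∀ t ≥ (0 : ℝ), l₂ * u t ≤ deriv u t := by
    intro t ht
    rw [huder]
    have h1 := hineq t ht
    have key : l₂ * u t = -η₁ * deriv d t - l₁ * deriv d t - η₂ * d t := by
      simp only [hu]
      linear_combination deriv d t * hsum - d t * hprod
    rw [key]
    linarith
  have hupos : ∀ t ≥ (0 : ℝ), 0 < u t := by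
    intro t ht
    have h1 := gronwall_lower l₂ u hud hugr t ht
    have h2 : 0 < Real.exp (l₂ * t) * u 0 := mul_pos (Real.exp_pos _) hu0
    linarith
  -- now d' ≥ l₁ d on [0,∞)
  have hdgr : ∀ t ≥ (0 : ℝ), l₁ * d t ≤ deriv d t := by
    intro t ht
    have := hupos t ht
    simp only [hu] at this
    linarith
  intro t ht
  have := gronwall_lower l₁ d hdd hdgr t ht
  have hpos : 0 < Real.exp (l₁ * t) * d 0 := mul_pos (Real.exp_pos _) (h0 ▸ hd₀)
  linarith
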